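/- In the tower field construction with basis elements v_k = ∏_{j: bit j of k = 1} x_{j+1}, for every i: v_i² + v_i ∈ V_i, where V_i = span_{GF(2)}{v₀, …, v_{i−1}}. -/

import Mathlib

set_option linter.unusedSectionVars false

section Aux

variable {F : Type*} [Field F] [CharP F 2] [DecidableEq F]

/-- membership in the subset-sum set -/
private def W (v : ℕ → F) (i : ℕ) : Finset F :=
  ((Finset.range i).powerset).image (fun S => ∑ j ∈ S, v j)

private lemma zero_mem_W (v : ℕ → F) (i : ℕ) : (0 : F) ∈ W v i :=
  Finset.mem_image.2 ⟨∅, by simp, by simp⟩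

private lemma single_mem_W (v : ℕ → F) {l i : ℕ} (h : l < i) : v l ∈ W v i :=
  Finset.mem_image.2 ⟨{l}, by simp [Finset.mem_range.2 h], by simp⟩

private lemma mono_W (v : ℕ → F) {i i' : ℕ} (h : i ≤ i') : W v i ⊆ W v i' := by
  apply Finset.image_subset_image
  exact Finset.powerset_mono.2 (Finset.range_subset_range.2 h)

private lemma add_mem_W (v : ℕ → F) {i : ℕ} {y z : F} (hy : y ∈ W v i) (hz : z ∈ W v i) :
    y + z ∈ W v i := by
  rw [W, Finset.mem_image] at hy hz ⊢
  obtain ⟨S, hS, rfl⟩ := hy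
  obtain ⟨T, hT, rfl⟩ := hz
  rw [Finset.mem_powerset] at hS hT
  refine ⟨(S ∪ T) \ (S ∩ T), Finset.mem_powerset.2 ?_, ?_⟩
  · exact (Finset.sdiff_subset).trans (Finset.union_subset hS hT)
  · have h2 := Finset.sum_sdiff (f := v) (Finset.inter_subset_union (s := S) (t := T))
    have h3 := Finset.sum_union_inter (s₁ := S) (s₂ := T) (f := v)
    show ∑ j ∈ (S ∪ T) \ (S ∩ T), v j = ∑ j ∈ S, v j + ∑ j ∈ T, v j
    rw [← h3, ← h2, add_assoc, CharTwo.add_self_eq_zero, add_zero]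

private lemma sum_mem_W (v : ℕ → F) {i : ℕ} {ι : Type*} (S : Finset ι) (f : ι → F)
    (h : ∀ s ∈ S, f s ∈ W v i) : ∑ s ∈ S, f s ∈ W v i :=
  Finset.sum_induction f (· ∈ W v i) (fun _ _ ha hb => add_mem_W v ha hb) (zero_mem_W v i) h

private lemma mul_mem_W (v : ℕ → F) {n : ℕ}
    (hvv : ∀ a < n, ∀ b < n, v a * v b ∈ W v n) {y z : F}
    (hy : y ∈ W v n) (hz : z ∈ W v n) : y * z ∈ W v n := by
  rw [W, Finset.mem_image] at hy hz
  obtain ⟨S, hS, rfl⟩ := hy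
  obtain ⟨T, hT, rfl⟩ := hz
  rw [Finset.mem_powerset] at hS hT
  show (∑ a ∈ S, v a) * (∑ b ∈ T, v b) ∈ W v n
  rw [Finset.sum_mul_sum]
  refine sum_mem_W v _ _ fun a ha => sum_mem_W v _ _ fun b hb => ?_
  exact hvv a (Finset.mem_range.1 (hS ha)) b (Finset.mem_range.1 (hT hb))

variable (x v : ℕ → F)
    (hx : ∀ m, x (m + 1) ^ 2 + x (m + 1) = ∏ j ∈ Finset.range m, x (j + 1))
    (hv : ∀ k, v k = ∏ j ∈ Finset.range k, if k.testBit j then x (j + 1) else 1)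

include hv in
private lemma hv' : ∀ n j, j < 2 ^ n →
    v j = ∏ l ∈ Finset.range n, if j.testBit l then x (l + 1) else 1 := by
  intro n j hj
  rw [hv]
  rcases le_total j n with h | h
  · refine Finset.prod_subset (Finset.range_subset_range.2 h) ?_
    intro l _ hl
    rw [Finset.mem_range, not_lt] at hl
    rw [Nat.testBit_lt_two_pow (lt_of_le_of_lt hl (Nat.lt_two_pow_self (n := l))), if_neg (by simp)]
  · refine (Finset.prod_subset (Finset.range_subset_range.2 h) ?_).symm
    intro l _ hl
    rw [Finset.mem_range, not_lt] at hl
    have : j < 2 ^ l := lt_of_lt_of_le hj (Nat.pow_le_pow_right (by norm_num) hl)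
    rw [Nat.testBit_lt_two_pow this, if_neg (by simp)]

include hv in
private lemma hmul : ∀ k j, j < 2 ^ k → v (2 ^ k + j) = x (k + 1) * v j := by
  intro k j hj
  have h1 : 2 ^ k + j < 2 ^ (k + 1) := by rw [pow_succ]; omega
  rw [hv' x v hv (k + 1) _ h1, Finset.prod_range_succ, hv' x v hv k j hj]
  have hbit : (2 ^ k + j).testBit k = true := by
    rw [Nat.testBit_two_pow_add_eq, Nat.testBit_lt_two_pow hj]; rfl
  have hcong : ∀ l ∈ Finset.range k,
      (if (2 ^ k + j).testBit l then x (l + 1) else 1) =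
      (if j.testBit l then x (l + 1) else 1) := by
    intro l hl
    rw [Nat.testBit_two_pow_add_gt (Finset.mem_range.1 hl)]
  rw [Finset.prod_congr rfl hcong, hbit, if_pos rfl, mul_comm]

include hv in
private lemma hones : ∀ k, v (2 ^ k - 1) = ∏ l ∈ Finset.range k, x (l + 1) := by
  intro k
  have h1 : 2 ^ k - 1 < 2 ^ k := by have := Nat.one_le_two_pow (n := k); omega
  rw [hv' x v hv k _ h1]
  refine Finset.prod_congr rfl fun l hl => ?_
  rw [Nat.testBit_two_pow_sub_one, if_pos (by simpa using Finset.mem_range.1 hl)]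

include hx hv in
private lemma shift_mem_W : ∀ k j, j ≤ 2 ^ k → ∀ y ∈ W v j,
    x (k + 1) * y ∈ W v (2 ^ k + j) := by
  intro k j hj y hy
  rw [W, Finset.mem_image] at hy
  obtain ⟨S, hS, rfl⟩ := hy
  rw [Finset.mem_powerset] at hS
  refine Finset.mem_image.2 ⟨S.image (2 ^ k + ·), Finset.mem_powerset.2 ?_, ?_⟩
  · intro a ha
    obtain ⟨l, hl, rfl⟩ := Finset.mem_image.1 ha
    have := Finset.mem_range.1 (hS hl)
    exact Finset.mem_range.2 (by omega)
  · rw [Finset.sum_image (fun a _ b _ h => by omega), Finset.mul_sum]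
    refine Finset.sum_congr rfl fun l hl => ?_
    have hlj := Finset.mem_range.1 (hS hl)
    rw [hmul x v hv k l (lt_of_lt_of_le hlj hj)]

include hx hv in
private lemma vmul : ∀ k, ∀ a < 2 ^ k, ∀ b < 2 ^ k, v a * v b ∈ W v (2 ^ k) := by
  intro k
  induction k with
  | zero =>
    intro a ha b hb
    interval_cases a
    interval_cases b
    have h0 : v 0 = 1 := by rw [hv]; simp
    rw [h0, mul_one, ← h0]
    exact single_mem_W v (show 0 < 2 ^ 0 by norm_num)
  | succ k ih =>
    have hW := fun {y z} hy hz => mul_mem_W v ih (y := y) (z := z) hy hz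
    have hsplit : (2:ℕ) ^ (k + 1) = 2 ^ k + 2 ^ k := by rw [pow_succ]; omega
    have hmono : W v (2 ^ k) ⊆ W v (2 ^ (k + 1)) :=
      mono_W v (Nat.pow_le_pow_right (by norm_num) (by omega))
    -- handle the shifted case generically
    have hshift : ∀ y ∈ W v (2 ^ k), x (k + 1) * y ∈ W v (2 ^ (k + 1)) := by
      intro y hy
      rw [hsplit]
      exact shift_mem_W x v hx hv k (2 ^ k) le_rfl y hy
    have hx2 : x (k + 1) ^ 2 = x (k + 1) + v (2 ^ k - 1) := by
      have h := hx k
      rw [← hones x v hv k] at h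
      have h2 : (2 : F) = 0 := by
        have := CharP.cast_eq_zero F 2; exact_mod_cast this
      linear_combination h - x (k + 1) * h2
    intro a ha b hb
    rcases lt_or_ge a (2 ^ k) with ha' | ha' <;> rcases lt_or_ge b (2 ^ k) with hb' | hb'
    · exact hmono (ih a ha' b hb')
    · obtain ⟨b0, rfl, hb0⟩ : ∃ b0, b = 2 ^ k + b0 ∧ b0 < 2 ^ k :=
        ⟨b - 2 ^ k, by omega, by omega⟩
      rw [hmul x v hv k b0 hb0]
      have hre : v a * (x (k + 1) * v b0) = x (k + 1) * (v a * v b0) := by ring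
      rw [hre]
      exact hshift _ (ih a ha' b0 hb0)
    · obtain ⟨a0, rfl, ha0⟩ : ∃ a0, a = 2 ^ k + a0 ∧ a0 < 2 ^ k :=
        ⟨a - 2 ^ k, by omega, by omega⟩
      rw [hmul x v hv k a0 ha0, mul_assoc]
      exact hshift _ (ih a0 ha0 b hb')
    · obtain ⟨a0, rfl, ha0⟩ : ∃ a0, a = 2 ^ k + a0 ∧ a0 < 2 ^ k :=
        ⟨a - 2 ^ k, by omega, by omega⟩
      obtain ⟨b0, rfl, hb0⟩ : ∃ b0, b = 2 ^ k + b0 ∧ b0 < 2 ^ k :=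
        ⟨b - 2 ^ k, by omega, by omega⟩
      rw [hmul x v hv k a0 ha0, hmul x v hv k b0 hb0]
      have key : x (k + 1) * v a0 * (x (k + 1) * v b0) =
          x (k + 1) * (v a0 * v b0) + v (2 ^ k - 1) * (v a0 * v b0) := by
        linear_combination (v a0 * v b0) * hx2
      rw [key]
      refine add_mem_W v (hshift _ (ih a0 ha0 b0 hb0)) (hmono ?_)
      exact hW (single_mem_W v (by have := Nat.one_le_two_pow (n := k); omega))
        (ih a0 ha0 b0 hb0)

end Aux

/-- In the tower field construction (`x_{m+1}² + x_{m+1} = x₁⋯x_m`, with basis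
elements `v_k = ∏_{j : bit j of k = 1} x_{j+1}`), for every `i` we have
`v_i² + v_i ∈ V_i`, where `V_i` is the `GF(2)`-span of `v₀, …, v_{i−1}`
(the set of subset sums). -/
theorem stmt_12 (F : Type*) [Field F] [CharP F 2] [DecidableEq F] (x : ℕ → F)
    (hx : ∀ m, x (m + 1) ^ 2 + x (m + 1) = ∏ j ∈ Finset.range m, x (j + 1))
    (v : ℕ → F)
    (hv : ∀ k, v k = ∏ j ∈ Finset.range k, if k.testBit j then x (j + 1) else 1) :
    ∀ i, v i ^ 2 + v i ∈
      ((Finset.range i).powerset).image (fun S => ∑ j ∈ S, v j) := by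
  have h2 : (2 : F) = 0 := by have := CharP.cast_eq_zero F 2; exact_mod_cast this
  intro i
  induction i using Nat.strong_induction_on with
  | _ i ih =>
    rcases Nat.eq_zero_or_pos i with rfl | hi
    · have h0 : v 0 = 1 := by rw [hv]; simp
      refine Finset.mem_image.2 ⟨∅, by simp, ?_⟩
      simp only [Finset.sum_empty, h0, one_pow]
      linear_combination -h2
    · set k := Nat.log 2 i with hk
      have hk1 : 2 ^ k ≤ i := Nat.pow_log_le_self 2 hi.ne'
      have hk2 : i < 2 ^ (k + 1) := Nat.lt_pow_succ_log_self (by norm_num) i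
      have hsplit : (2:ℕ) ^ (k + 1) = 2 ^ k + 2 ^ k := by rw [pow_succ]; omega
      set j := i - 2 ^ k with hj
      have hj1 : j < 2 ^ k := by omega
      have hij : i = 2 ^ k + j := by omega
      have hvi : v i = x (k + 1) * v j := by rw [hij]; exact hmul x v hv k j hj1
      have hx2 : x (k + 1) ^ 2 = x (k + 1) + v (2 ^ k - 1) := by
        have h := hx k
        rw [← hones x v hv k] at h
        linear_combination h - x (k + 1) * h2
      have key : v i ^ 2 + v i =
          x (k + 1) * (v j ^ 2 + v j) + v (2 ^ k - 1) * (v j * v j) := by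
        rw [hvi]; linear_combination (v j)^2 * hx2
      rw [key]
      show _ ∈ W v i
      have t1 : x (k + 1) * (v j ^ 2 + v j) ∈ W v i := by
        rw [hij]
        exact shift_mem_W x v hx hv k j hj1.le _ (ih j (by omega))
      have t2 : v (2 ^ k - 1) * (v j * v j) ∈ W v i := by
        refine mono_W v hk1 ?_
        exact mul_mem_W v (vmul x v hx hv k)
          (single_mem_W v (by have := Nat.one_le_two_pow (n := k); omega))
          (vmul x v hx hv k j hj1 j hj1)
      exact add_mem_W v t1 t2
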